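/- The function y: [0,∞) → ℝ² defined by y(t) = (sin t, 1 - cos t) for t ∈ [2nπ, 2(n+1)π) with n even, and y(t) = (sin t, cos t - 1) for t ∈ [2(n+1)π, 2(n+2)π) with n even, is continuous, satisfies y(0) = (0,0), and solves the ODE y₁' = 1 - y₂, y₂' = y₁ on the region {y₂ ≥ 0} and y₁' = y₂ + 1, y₂' = -y₁ on the region {y₂ < 0}. -/

import Mathlib

open Real Set

private noncomputable def fk (k : ℕ) (t : ℝ) : ℝ × ℝ :=
  (Real.sin t, (-1:ℝ)^k * (1 - Real.cos t))

private lemma fk_deriv (k : ℕ) (t : ℝ) :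
    HasDerivAt (fk k) (Real.cos t, (-1:ℝ)^k * Real.sin t) t := by
  apply HasDerivAt.prodMk (Real.hasDerivAt_sin t)
  have h : HasDerivAt (fun t => 1 - Real.cos t) (Real.sin t) t := by
    simpa using (Real.hasDerivAt_cos t).const_sub (1:ℝ)
  simpa using h.const_mul ((-1:ℝ)^k)

private lemma sin_two_k (k : ℕ) : Real.sin (2 * (k:ℝ) * π) = 0 := by
  have : (2 * (k:ℝ) * π) = ((2*k : ℕ) : ℝ) * π := by push_cast; ring
  rw [this, Real.sin_nat_mul_pi]

private lemma cos_two_k (k : ℕ) : Real.cos (2 * (k:ℝ) * π) = 1 := by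
  have : (2 * (k:ℝ) * π) = ((k : ℕ) : ℝ) * (2 * π) := by push_cast; ring
  rw [this, Real.cos_nat_mul_two_pi]

private lemma exists_k (t : ℝ) (ht : 0 ≤ t) :
    ∃ k : ℕ, t ∈ Set.Ico (2 * (k:ℝ) * π) (2 * ((k:ℝ) + 1) * π) := by
  refine ⟨(⌊t / (2*π)⌋).toNat, ?_, ?_⟩
  · have h0 : (0:ℤ) ≤ ⌊t / (2*π)⌋ := Int.floor_nonneg.2 (by positivity)
    have h1 : ((⌊t / (2*π)⌋ : ℤ) : ℝ) ≤ t / (2*π) := Int.floor_le _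
    have e : ((⌊t / (2*π)⌋).toNat : ℝ) = (⌊t / (2*π)⌋ : ℝ) := by
      exact_mod_cast Int.toNat_of_nonneg h0
    rw [e]
    have := (le_div_iff₀ (by positivity : (0:ℝ) < 2*π)).1 h1
    nlinarith [Real.pi_pos]
  · have h0 : (0:ℤ) ≤ ⌊t / (2*π)⌋ := Int.floor_nonneg.2 (by positivity)
    have h1 : t / (2*π) < (⌊t / (2*π)⌋ : ℝ) + 1 := Int.lt_floor_add_one _
    have e : ((⌊t / (2*π)⌋).toNat : ℝ) = (⌊t / (2*π)⌋ : ℝ) := by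
      exact_mod_cast Int.toNat_of_nonneg h0
    rw [e]
    have := (div_lt_iff₀ (by positivity : (0:ℝ) < 2*π)).1 h1
    nlinarith [Real.pi_pos]

/-- The piecewise curve `y(t) = (sin t, 1 - cos t)` on `[2nπ, 2(n+1)π)` (`n` even) and
`y(t) = (sin t, cos t - 1)` on `[2(n+1)π, 2(n+2)π)` (`n` even) is continuous on `[0,∞)`,
starts at the origin and solves the ODE `y₁' = 1 - y₂, y₂' = y₁` where `y₂ ≥ 0` and
`y₁' = y₂ + 1, y₂' = -y₁` where `y₂ < 0`. -/
theorem stmt_11 (y : ℝ → ℝ × ℝ)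
    (h1 : ∀ n : ℕ, Even n → ∀ t ∈ Set.Ico (2 * (n : ℝ) * π) (2 * ((n : ℝ) + 1) * π),
      y t = (Real.sin t, 1 - Real.cos t))
    (h2 : ∀ n : ℕ, Even n → ∀ t ∈ Set.Ico (2 * ((n : ℝ) + 1) * π) (2 * ((n : ℝ) + 2) * π),
      y t = (Real.sin t, Real.cos t - 1)) :
    ContinuousOn y (Set.Ici 0) ∧ y 0 = (0, 0) ∧
    ∀ t ∈ Set.Ici (0 : ℝ),
      (0 ≤ (y t).2 → HasDerivWithinAt y (1 - (y t).2, (y t).1) (Set.Ici 0) t) ∧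
      ((y t).2 < 0 → HasDerivWithinAt y ((y t).2 + 1, -(y t).1) (Set.Ici 0) t) := by
  have hf : ∀ k : ℕ, ∀ t ∈ Set.Ico (2*(k:ℝ)*π) (2*((k:ℝ)+1)*π), y t = fk k t := by
    intro k
    rcases Nat.even_or_odd k with hk | hk
    · intro t ht
      rw [h1 k hk t ht, fk, hk.neg_one_pow, one_mul]
    · obtain ⟨m, hm⟩ := hk
      intro t ht
      have hev : Even (2*m) := even_two_mul m
      have e1 : 2 * (((2*m : ℕ):ℝ) + 1) * π = 2*(k:ℝ)*π := by
        subst hm; push_cast; ring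
      have e2 : 2 * (((2*m : ℕ):ℝ) + 2) * π = 2*((k:ℝ)+1)*π := by
        subst hm; push_cast; ring
      rw [h2 (2*m) hev t (by rw [e1, e2]; exact ht), fk, hm, pow_succ, pow_mul]
      norm_num
  have key : ∀ k : ℕ, ∀ t ∈ Set.Ico (2*(k:ℝ)*π) (2*((k:ℝ)+1)*π),
      HasDerivWithinAt y (Real.cos t, (-1:ℝ)^k * Real.sin t) (Set.Ici 0) t := by
    intro k t ht
    rcases eq_or_lt_of_le ht.1 with heq | hlt
    · -- t is the left endpoint 2kπ
      have hsin : Real.sin t = 0 := by rw [← heq]; exact sin_two_k k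
      have hcos : Real.cos t = 1 := by rw [← heq]; exact cos_two_k k
      -- right-side derivative
      have hright : HasDerivWithinAt y (Real.cos t, (-1:ℝ)^k * Real.sin t)
          (Set.Ico t (2*((k:ℝ)+1)*π)) t := by
        refine ((fk_deriv k t).hasDerivWithinAt).congr ?_ (hf k t ht)
        intro s hs
        exact hf k s ⟨heq ▸ hs.1, hs.2⟩
      cases k with
      | zero =>
        have ht0 : t = 0 := by rw [← heq]; ring
        refine hright.mono_of_mem_nhdsWithin ?_
        rw [ht0, ← Set.Ici_inter_Iio]
        exact inter_mem_nhdsWithin _ (Iio_mem_nhds (by positivity))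
      | succ m =>
        have hmt : 2*((m:ℝ)+1)*π = t := by rw [← heq]; push_cast; ring
        have hlt' : 2*((m:ℝ))*π < t := by
          rw [← hmt]; nlinarith [Real.pi_pos]
        have hltb : t < 2*((m:ℝ)+1+1)*π := by
          have := ht.2; push_cast at this ⊢; linarith
        have heqfk : fk m t = y t := by
          rw [hf (m+1) t ht, fk, fk, hsin, hcos]
          norm_num
        have hleft : HasDerivWithinAt y (Real.cos t, (-1:ℝ)^(m+1) * Real.sin t)
            (Set.Icc (2*(m:ℝ)*π) t) t := by
          have hd : HasDerivWithinAt (fk m) (Real.cos t, (-1:ℝ)^(m+1) * Real.sin t)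
              (Set.Icc (2*(m:ℝ)*π) t) t := by
            have := (fk_deriv m t).hasDerivWithinAt (s := Set.Icc (2*(m:ℝ)*π) t)
            simpa [hsin] using this
          refine hd.congr ?_ heqfk.symm
          intro s hs
          rcases eq_or_lt_of_le hs.2 with rfl | hslt
          · exact heqfk.symm
          · exact hf m s ⟨hs.1, hmt ▸ hslt⟩
        have hunion := hleft.union hright
        refine hunion.mono_of_mem_nhdsWithin (mem_nhdsWithin_of_mem_nhds ?_)
        refine Filter.mem_of_superset (isOpen_Ioo.mem_nhds
          (⟨hlt', hltb⟩ : t ∈ Set.Ioo (2*(m:ℝ)*π) (2*((m:ℝ)+1+1)*π))) ?_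
        intro s hs
        rcases le_or_gt s t with h | h
        · exact Or.inl ⟨le_of_lt hs.1, h⟩
        · exact Or.inr ⟨le_of_lt h, by push_cast at hs ⊢; linarith [hs.2]⟩
    · -- interior point
      have hIoo : Set.Ioo (2*(k:ℝ)*π) (2*((k:ℝ)+1)*π) ∈ nhdsWithin t (Set.Ici 0) :=
        mem_nhdsWithin_of_mem_nhds (isOpen_Ioo.mem_nhds ⟨hlt, ht.2⟩)
      refine ((fk_deriv k t).hasDerivWithinAt).congr_of_eventuallyEq ?_ (hf k t ht)
      filter_upwards [hIoo] with s hs using hf k s ⟨le_of_lt hs.1, hs.2⟩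
  refine ⟨?_, ?_, ?_⟩
  · intro t ht
    obtain ⟨k, hk⟩ := exists_k t ht
    exact (key k t hk).continuousWithinAt
  · have h0 : (0:ℝ) ∈ Set.Ico (2*((0:ℕ):ℝ)*π) (2*(((0:ℕ):ℝ)+1)*π) := by
      constructor
      · norm_num
      · push_cast; nlinarith [Real.pi_pos]
    rw [hf 0 0 h0]
    simp [fk]
  · intro t ht
    obtain ⟨k, hk⟩ := exists_k t ht
    have hyt := hf k t hk
    have hd := key k t hk
    rcases Nat.even_or_odd k with hpar | hpar
    · rw [hpar.neg_one_pow] at hd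
      rw [hyt, fk, hpar.neg_one_pow]
      constructor
      · intro _
        convert hd using 2 <;> ring
      · intro hneg
        simp only at hneg
        nlinarith [Real.cos_le_one t]
    · rw [hpar.neg_one_pow] at hd
      rw [hyt, fk, hpar.neg_one_pow]
      constructor
      · intro hpos
        simp only at hpos
        have hc : Real.cos t = 1 := by nlinarith [Real.cos_le_one t]
        have hs : Real.sin t = 0 := by nlinarith [Real.sin_sq_add_cos_sq t]
        convert hd using 2 <;> simp [hc, hs] <;> ring
      · intro _
        convert hd using 2 <;> ring
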